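/- For every θ > 0, the energy of the uniform measure on [0,1] for the squared Matérn 3/2 kernel satisfies ∫₀¹∫₀¹ (1 + θ|x−y|)²·exp(−2θ|x−y|) dx dy = (1/(4θ²))·[(2θ² + 8θ + 9)·e^{−2θ} + 10θ − 9]; moreover, for every x ∈ [0,1], ∫₀¹ (1 + θ|x−t|)²·exp(−2θ|x−t|) dt = T_θ(x) + T_θ(1−x), where T_θ(u) = (1/(4θ))·[5 − (5 + 6θu + 2θ²u²)·e^{−2θu}]. -/

import Mathlib

open intervalIntegral

/-- Energy and potential of the uniform measure on `[0,1]` for the squared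
Matérn 3/2 kernel:
`∫₀¹∫₀¹ (1 + θ|x-y|)² e^{-2θ|x-y|} dx dy = (1/(4θ²))[(2θ² + 8θ + 9)e^{-2θ} + 10θ - 9]`,
and for `x ∈ [0,1]`, `∫₀¹ (1 + θ|x-t|)² e^{-2θ|x-t|} dt = T_θ(x) + T_θ(1-x)` where
`T_θ(u) = (1/(4θ))[5 - (5 + 6θu + 2θ²u²)e^{-2θu}]`. -/
theorem matern32_squared_energy_potential (θ : ℝ) (hθ : 0 < θ) :
    letI T : ℝ → ℝ := fun u =>
      (1 / (4 * θ)) * (5 - (5 + 6 * θ * u + 2 * θ ^ 2 * u ^ 2) * Real.exp (-2 * θ * u))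
    (∫ x in (0:ℝ)..1, ∫ y in (0:ℝ)..1,
        (1 + θ * |x - y|) ^ 2 * Real.exp (-2 * θ * |x - y|)
      = 1 / (4 * θ ^ 2) * ((2 * θ ^ 2 + 8 * θ + 9) * Real.exp (-2 * θ) + 10 * θ - 9)) ∧
    (∀ x ∈ Set.Icc (0:ℝ) 1,
      ∫ t in (0:ℝ)..1, (1 + θ * |x - t|) ^ 2 * Real.exp (-2 * θ * |x - t|)
        = T x + T (1 - x)) := by
  set T : ℝ → ℝ := fun u =>
      1 / (4 * θ) * (5 - (5 + 6 * θ * u + 2 * θ ^ 2 * u ^ 2) * Real.exp (-2 * θ * u))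
    with hTdef
  have hθ0 : θ ≠ 0 := ne_of_gt hθ
  set f : ℝ → ℝ := fun u => (1 + θ * u) ^ 2 * Real.exp (-2 * θ * u) with hf
  have hexp : ∀ u : ℝ, HasDerivAt (fun u : ℝ => Real.exp (-2 * θ * u))
      ((-2 * θ) * Real.exp (-2 * θ * u)) u := by
    intro u
    have h := ((hasDerivAt_id u).const_mul (-2 * θ)).exp
    simpa [mul_comm] using h
  have hT : ∀ u : ℝ, HasDerivAt T (f u) u := by
    intro u
    have hpoly : HasDerivAt (fun u : ℝ => 5 + 6 * θ * u + 2 * θ ^ 2 * u ^ 2)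
        (6 * θ + 2 * θ ^ 2 * (2 * u)) u := by
      have h1 : HasDerivAt (fun u : ℝ => 5 + 6 * θ * u) (6 * θ) u := by
        simpa using ((hasDerivAt_id u).const_mul (6 * θ)).const_add 5
      have h2 : HasDerivAt (fun u : ℝ => 2 * θ ^ 2 * u ^ 2) (2 * θ ^ 2 * (2 * u)) u := by
        simpa using (hasDerivAt_pow 2 u).const_mul (2 * θ ^ 2)
      exact h1.add h2
    have h := (((hasDerivAt_const u (5:ℝ)).sub (hpoly.mul (hexp u))).const_mul (1 / (4 * θ)))
    refine h.congr_deriv ?_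
    simp only [hf]
    field_simp
    ring
  have hfc : Continuous f := by fun_prop
  have hTc : Continuous T := by rw [hTdef]; fun_prop
  have hT0 : T 0 = 0 := by simp [hTdef]
  -- potential
  have hpot : ∀ x ∈ Set.Icc (0:ℝ) 1,
      ∫ t in (0:ℝ)..1, (1 + θ * |x - t|) ^ 2 * Real.exp (-2 * θ * |x - t|)
        = T x + T (1 - x) := by
    intro x hx
    obtain ⟨hx0, hx1⟩ := hx
    have hcont : Continuous fun t => (1 + θ * |x - t|) ^ 2 * Real.exp (-2 * θ * |x - t|) := by
      fun_prop
    rw [← intervalIntegral.integral_add_adjacent_intervals (a := (0:ℝ)) (b := x) (c := 1)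
      (hcont.intervalIntegrable _ _) (hcont.intervalIntegrable _ _)]
    have e1 : (∫ t in (0:ℝ)..x, (1 + θ * |x - t|) ^ 2 * Real.exp (-2 * θ * |x - t|)) = T x := by
      have hcg : ∀ t ∈ Set.uIcc (0:ℝ) x,
          (1 + θ * |x - t|) ^ 2 * Real.exp (-2 * θ * |x - t|) = f (x - t) := by
        intro t ht
        rw [Set.uIcc_of_le hx0] at ht
        rw [abs_of_nonneg (by linarith [ht.2])]
      rw [intervalIntegral.integral_congr hcg, intervalIntegral.integral_comp_sub_left f x]
      simp only [sub_self, sub_zero]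
      rw [intervalIntegral.integral_eq_sub_of_hasDerivAt (fun t _ => hT t)
        (hfc.intervalIntegrable _ _), hT0, sub_zero]
    have e2 : (∫ t in x..(1:ℝ), (1 + θ * |x - t|) ^ 2 * Real.exp (-2 * θ * |x - t|)) = T (1 - x) := by
      have hcg : ∀ t ∈ Set.uIcc x (1:ℝ),
          (1 + θ * |x - t|) ^ 2 * Real.exp (-2 * θ * |x - t|) = f (t - x) := by
        intro t ht
        rw [Set.uIcc_of_le hx1] at ht
        rw [abs_sub_comm, abs_of_nonneg (by linarith [ht.1])]
      rw [intervalIntegral.integral_congr hcg, intervalIntegral.integral_comp_sub_right f x]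
      simp only [sub_self]
      rw [intervalIntegral.integral_eq_sub_of_hasDerivAt (fun t _ => hT t)
        (hfc.intervalIntegrable _ _), hT0, sub_zero]
    rw [e1, e2]
  refine ⟨?_, hpot⟩
  -- energy
  set S : ℝ → ℝ := fun u => 5 * u / (4 * θ)
      + (9 / (8 * θ ^ 2) + u / θ + u ^ 2 / 4) * Real.exp (-2 * θ * u) with hS
  have hSd : ∀ u : ℝ, HasDerivAt S (T u) u := by
    intro u
    have h1 : HasDerivAt (fun u : ℝ => 5 * u / (4 * θ)) (5 / (4 * θ)) u := by
      have h := (hasDerivAt_id u).const_mul (5 / (4 * θ))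
      have heq : (fun u : ℝ => 5 * u / (4 * θ)) = fun y : ℝ => 5 / (4 * θ) * id y := by
        funext y; simp; ring
      rw [heq]
      exact h.congr_deriv (by ring)
    have h2 : HasDerivAt (fun u : ℝ => 9 / (8 * θ ^ 2) + u / θ + u ^ 2 / 4)
        (1 / θ + 2 * u / 4) u := by
      have ha : HasDerivAt (fun u : ℝ => 9 / (8 * θ ^ 2) + u / θ) (1 / θ) u := by
        have h := ((hasDerivAt_id u).const_mul (1 / θ)).const_add (9 / (8 * θ ^ 2))
        have heq : (fun u : ℝ => 9 / (8 * θ ^ 2) + u / θ)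
            = fun y : ℝ => 9 / (8 * θ ^ 2) + 1 / θ * id y := by
          funext y; simp; ring
        rw [heq]
        exact h.congr_deriv (by ring)
      have hb : HasDerivAt (fun u : ℝ => u ^ 2 / 4) (2 * u / 4) u := by
        have h := (hasDerivAt_pow 2 u).div_const 4
        exact h.congr_deriv (by push_cast; ring)
      exact ha.add hb
    have h := h1.add (h2.mul (hexp u))
    refine h.congr_deriv ?_
    simp only [hTdef]
    field_simp
    ring
  have hcongr : ∀ x ∈ Set.uIcc (0:ℝ) 1,
      (∫ y in (0:ℝ)..1, (1 + θ * |x - y|) ^ 2 * Real.exp (-2 * θ * |x - y|))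
        = T x + T (1 - x) := by
    intro x hx
    exact hpot x (by rwa [Set.uIcc_of_le zero_le_one] at hx)
  have hint2 : IntervalIntegrable (fun x : ℝ => T (1 - x)) MeasureTheory.volume 0 1 :=
    (hTc.comp (continuous_const.sub continuous_id)).intervalIntegrable _ _
  rw [intervalIntegral.integral_congr hcongr,
    intervalIntegral.integral_add (hTc.intervalIntegrable _ _) hint2]
  have hI : (∫ x in (0:ℝ)..1, T x) = S 1 - S 0 :=
    intervalIntegral.integral_eq_sub_of_hasDerivAt (fun t _ => hSd t)
      (hTc.intervalIntegrable _ _)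
  have hI2 : (∫ x in (0:ℝ)..1, T (1 - x)) = S 1 - S 0 := by
    rw [intervalIntegral.integral_comp_sub_left T 1]
    simpa using hI
  rw [hI, hI2]
  simp only [hS]
  have h0 : Real.exp (-2 * θ * 0) = 1 := by norm_num
  have h1 : Real.exp (-2 * θ * 1) = Real.exp (-2 * θ) := by norm_num
  rw [h0, h1]
  field_simp
  ring
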